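/- Let G be a simple connected graph with n ≥ 2 vertices and m edges, and write a_k = d(G,k). Then the Wiener index of the Mycielskian of G is W(μ(G)) = 6n² − n − 7m − 4a_2 − a_3. -/

import Mathlib

open SimpleGraph Polynomial Finset

/-- The Mycielskian `μ(G)` of a simple graph `G`. Vertices `Sum.inl v` are the original
vertices `v_i`, vertices `Sum.inr (Sum.inl v)` are the shadow vertices `u_i`, and
`Sum.inr (Sum.inr ())` is the apex vertex `w`.  Edges: the edges of `G`, the edges `w u_i`,
and the edges `u_i v_j`, `u_j v_i` for every edge `v_i v_j` of `G`. -/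
def mycielskian {V : Type*} (G : SimpleGraph V) : SimpleGraph (V ⊕ V ⊕ Unit) :=
  SimpleGraph.fromRel (fun a b =>
    match a, b with
    | Sum.inl a, Sum.inl b => G.Adj a b
    | Sum.inl a, Sum.inr (Sum.inl b) => G.Adj a b
    | Sum.inr (Sum.inl _), Sum.inr (Sum.inr _) => True
    | _, _ => False)

/-- `distCount G k` is `d(G,k)`, the number of unordered pairs of distinct vertices of `G`
whose graph distance is exactly `k`. -/
noncomputable def distCount {V : Type*} (G : SimpleGraph V) (k : ℕ) : ℕ :=
  Nat.card {e : Sym2 V // ¬ e.IsDiag ∧ Sym2.lift ⟨G.dist, fun _ _ => G.dist_comm⟩ e = k}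

/-- The Hosoya polynomial `H(G,x) = Σ_{k=1}^{D(G)} d(G,k) x^k` (with rational coefficients). -/
noncomputable def hosoya {V : Type*} (G : SimpleGraph V) : Polynomial ℚ :=
  ∑ k ∈ Finset.Icc 1 G.diam, (distCount G k : ℚ) • Polynomial.X ^ k

/-- The Wiener index `W(G)`: the sum of distances over all unordered pairs of distinct
vertices (the diagonal contributes `0`, so we may sum over ordered pairs and halve). -/
noncomputable def wiener {V : Type*} (G : SimpleGraph V) [Fintype V] : ℚ :=
  (∑ u : V, ∑ v : V, (G.dist u v : ℚ)) / 2

/-- The Hyper-Wiener index `WW(G) = (1/2) Σ_{{u,v}} (d(u,v)² + d(u,v))`. -/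
noncomputable def hyperWiener {V : Type*} (G : SimpleGraph V) [Fintype V] : ℚ :=
  (∑ u : V, ∑ v : V, ((G.dist u v : ℚ) ^ 2 + (G.dist u v : ℚ))) / 4

/-- The TSZ index `TSZ(G) = (1/6) Σ_{{u,v}} d³ + (1/2) Σ_{{u,v}} d² + (1/3) Σ_{{u,v}} d`. -/
noncomputable def tszIndex {V : Type*} (G : SimpleGraph V) [Fintype V] : ℚ :=
  (∑ u : V, ∑ v : V, (G.dist u v : ℚ) ^ 3) / 12
    + (∑ u : V, ∑ v : V, (G.dist u v : ℚ) ^ 2) / 4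
    + (∑ u : V, ∑ v : V, (G.dist u v : ℚ)) / 6

/-- The Harary index `Har(G) = Σ_{{u,v}} 1/d(u,v)` (diagonal terms are `0⁻¹ = 0`). -/
noncomputable def harary {V : Type*} (G : SimpleGraph V) [Fintype V] : ℚ :=
  (∑ u : V, ∑ v : V, ((G.dist u v : ℚ))⁻¹) / 2

/-- The closeness `C(G) = Σ_u Σ_{v ≠ u} 2^{-d(u,v)}` over ordered pairs of distinct vertices. -/
noncomputable def closeness {V : Type*} (G : SimpleGraph V) [Fintype V] : ℚ :=
  letI := Classical.decEq V
  ∑ u : V, ∑ v : V, if v = u then 0 else ((1 : ℚ) / 2) ^ (G.dist u v)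

/-- `σ_{uv}`: the number of shortest paths (walks of length `dist u v`) from `u` to `v`. -/
noncomputable def numSP {V : Type*} (G : SimpleGraph V) (u v : V) : ℕ :=
  Nat.card {p : G.Walk u v // p.length = G.dist u v}

/-- `σ_{uv}(w)`: the number of shortest paths from `u` to `v` passing through `w`. -/
noncomputable def numSPthrough {V : Type*} (G : SimpleGraph V) (w u v : V) : ℕ :=
  Nat.card {p : G.Walk u v // p.length = G.dist u v ∧ w ∈ p.support}

/-- The betweenness centrality `B_w = Σ_{{u,v}, u ≠ w ≠ v} σ_{uv}(w)/σ_{uv}` of a vertex `w`,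
summed over unordered pairs of distinct vertices (ordered pairs, halved). -/
noncomputable def btwVertex {V : Type*} (G : SimpleGraph V) [Fintype V] (w : V) : ℚ :=
  letI := Classical.decEq V
  (∑ u : V, ∑ v : V,
    if u ≠ v ∧ u ≠ w ∧ v ≠ w then (numSPthrough G w u v : ℚ) / (numSP G u v) else 0) / 2

/-- The betweenness centrality of a graph: `B⁻(G) = (1/N) Σ_w B_w`. -/
noncomputable def btw {V : Type*} (G : SimpleGraph V) [Fintype V] : ℚ :=
  (∑ w : V, btwVertex G w) / (Fintype.card V)

/-- The star graph `S_n`: center `0` joined to the `n` leaves `1, …, n`. -/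
def starGraph (n : ℕ) : SimpleGraph (Fin (n + 1)) :=
  SimpleGraph.fromRel (fun a _ => a = 0)

/-- The join `G₁ ⊕ G₂` of two graphs on disjoint vertex sets: all edges of `G₁`, all edges
of `G₂`, and all edges between `V(G₁)` and `V(G₂)`. -/
def joinGraph {V₁ V₂ : Type*} (G₁ : SimpleGraph V₁) (G₂ : SimpleGraph V₂) :
    SimpleGraph (V₁ ⊕ V₂) :=
  SimpleGraph.fromRel (fun a b =>
    match a, b with
    | Sum.inl a, Sum.inl b => G₁.Adj a b
    | Sum.inr a, Sum.inr b => G₂.Adj a b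
    | Sum.inl _, Sum.inr _ => True
    | _, _ => False)


section MycAux

open SimpleGraph

variable {V : Type*} (G : SimpleGraph V)

lemma myc_adj_ll (a b : V) : (mycielskian G).Adj (.inl a) (.inl b) ↔ G.Adj a b := by
  simp only [mycielskian, fromRel_adj]
  constructor
  · rintro ⟨h, h1 | h1⟩ <;> [exact h1; exact h1.symm]
  · intro h; exact ⟨by simpa using h.ne, Or.inl h⟩

lemma myc_adj_lu (a b : V) : (mycielskian G).Adj (.inl a) (.inr (.inl b)) ↔ G.Adj a b := by
  simp [mycielskian, fromRel_adj]

lemma myc_adj_uw (a : V) : (mycielskian G).Adj (.inr (.inl a)) (.inr (.inr ())) := by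
  simp [mycielskian, fromRel_adj]

lemma myc_not_adj_lw (a : V) : ¬ (mycielskian G).Adj (.inl a) (.inr (.inr ())) := by
  simp [mycielskian, fromRel_adj]

lemma myc_not_adj_uu (a b : V) : ¬ (mycielskian G).Adj (.inr (.inl a)) (.inr (.inl b)) := by
  simp [mycielskian, fromRel_adj]

/-- projection of non-apex vertices to V -/
def mproj (d : V) : (V ⊕ V ⊕ Unit) → V
  | Sum.inl a => a
  | Sum.inr (Sum.inl a) => a
  | Sum.inr (Sum.inr _) => d

lemma myc_proj_adj (d : V) {x y : V ⊕ V ⊕ Unit} (h : (mycielskian G).Adj x y)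
    (hx : x ≠ Sum.inr (Sum.inr ())) (hy : y ≠ Sum.inr (Sum.inr ())) :
    G.Adj (mproj d x) (mproj d y) := by
  rcases x with a | a | a
  · rcases y with b | b | b
    · exact (myc_adj_ll G a b).mp h
    · exact (myc_adj_lu G a b).mp h
    · exact absurd rfl hy
  · rcases y with b | b | b
    · exact ((myc_adj_lu G b a).mp h.symm).symm
    · exact absurd h (myc_not_adj_uu G a b)
    · exact absurd rfl hy
  · exact absurd rfl hx

lemma myc_proj_walk (d : V) {x y : V ⊕ V ⊕ Unit} (p : (mycielskian G).Walk x y)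
    (hw : Sum.inr (Sum.inr ()) ∉ p.support) :
    ∃ q : G.Walk (mproj d x) (mproj d y), q.length = p.length := by
  induction p with
  | nil => exact ⟨.nil, rfl⟩
  | cons h p ih =>
    rename_i u v z
    rw [SimpleGraph.Walk.support_cons, List.mem_cons] at hw
    push_neg at hw
    obtain ⟨q, hq⟩ := ih hw.2
    refine ⟨.cons (myc_proj_adj G d h (Ne.symm hw.1) ?_) q, by simp [hq]⟩
    intro hv
    exact hw.2 (hv ▸ p.start_mem_support)

local notation "Wv" => (Sum.inr (Sum.inr ()) : V ⊕ V ⊕ Unit)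
local notation "Uv" a => (Sum.inr (Sum.inl a) : V ⊕ V ⊕ Unit)
local notation "M" => mycielskian G

lemma myc_dist_uw (a : V) : (M).dist (Uv a) Wv = 1 :=
  (SimpleGraph.dist_eq_one_iff_adj).mpr (myc_adj_uw G a)

variable (hnb : ∀ a : V, ∃ b, G.Adj a b)
include hnb

lemma myc_walk_lw (a : V) : ∃ p : (M).Walk (.inl a) Wv, p.length = 2 := by
  obtain ⟨c, hc⟩ := hnb a
  exact ⟨.cons ((myc_adj_lu G a c).mpr hc) (.cons (myc_adj_uw G c) .nil), rfl⟩

lemma myc_dist_lw (a : V) : (M).dist (.inl a) Wv = 2 := by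
  obtain ⟨p, hp⟩ := myc_walk_lw G hnb a
  have h1 : (M).dist (.inl a) Wv ≤ 2 := le_trans (SimpleGraph.dist_le p) (by rw [hp])
  have h0 : 0 < (M).dist (.inl a) Wv :=
    SimpleGraph.Reachable.pos_dist_of_ne ⟨p⟩ (by simp)
  have hne1 : (M).dist (.inl a) Wv ≠ 1 := fun h =>
    myc_not_adj_lw G a (SimpleGraph.dist_eq_one_iff_adj.mp h)
  omega

omit hnb in
lemma myc_dist_uu (a b : V) (hab : a ≠ b) : (M).dist (Uv a) (Uv b) = 2 := by
  let p : (M).Walk (Uv a) (Uv b) :=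
    .cons (myc_adj_uw G a) (.cons (myc_adj_uw G b).symm .nil)
  have h1 : (M).dist (Uv a) (Uv b) ≤ 2 := le_trans (SimpleGraph.dist_le p) (le_of_eq rfl)
  have h0 : 0 < (M).dist (Uv a) (Uv b) :=
    SimpleGraph.Reachable.pos_dist_of_ne ⟨p⟩ (by simp [hab])
  have hne1 : (M).dist (Uv a) (Uv b) ≠ 1 := fun h =>
    myc_not_adj_uu G a b (SimpleGraph.dist_eq_one_iff_adj.mp h)
  omega

lemma myc_connected (hc : G.Connected) : (M).Connected := by
  have hr : ∀ x : V ⊕ V ⊕ Unit, (M).Reachable x Wv := by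
    rintro (a | a | a)
    · obtain ⟨p, _⟩ := myc_walk_lw G hnb a
      exact ⟨p⟩
    · exact (myc_adj_uw G a).reachable
    · rfl
  have : Nonempty (V ⊕ V ⊕ Unit) := ⟨Wv⟩
  exact ⟨fun x y => (hr x).trans (hr y).symm⟩

omit hnb in
lemma myc_walk_of_walk : ∀ {a b : V} (p : G.Walk a b),
    ∃ q : (M).Walk (.inl a) (.inl b), q.length = p.length := by
  intro a b p
  induction p with
  | nil => exact ⟨.nil, rfl⟩
  | cons h _ ih =>
    obtain ⟨q, hq⟩ := ih
    exact ⟨.cons ((myc_adj_ll G _ _).mpr h) q, by simp [hq]⟩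

omit hnb in
lemma myc_walk_to_u : ∀ {a b : V} (p : G.Walk a b), p.length ≠ 0 →
    ∃ q : (M).Walk (.inl a) (Uv b), q.length = p.length := by
  intro a b p
  induction p with
  | nil => intro h; exact absurd rfl h
  | @cons a c b h p ih =>
    intro _
    by_cases hp : p.length = 0
    · cases p.eq_of_length_eq_zero hp
      exact ⟨.cons ((myc_adj_lu G _ _).mpr h) .nil, by simp [hp]⟩
    · obtain ⟨q, hq⟩ := ih hp
      exact ⟨.cons ((myc_adj_ll G a c).mpr h) q, by simp [hq]⟩

lemma myc_dist_ll (hc : G.Connected) (a b : V) :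
    (M).dist (.inl a) (.inl b) = min (G.dist a b) 4 := by
  by_cases hab : a = b
  · subst hab; rw [SimpleGraph.dist_self, SimpleGraph.dist_self, Nat.zero_min]
  · obtain ⟨q, hq⟩ := hc.exists_walk_length_eq_dist a b
    obtain ⟨q', hq'⟩ := myc_walk_of_walk G q
    have hub1 : (M).dist (.inl a) (.inl b) ≤ G.dist a b :=
      le_trans (SimpleGraph.dist_le q') (by rw [hq', hq])
    obtain ⟨c, hac⟩ := hnb a
    obtain ⟨d, hbd⟩ := hnb b
    let r : (M).Walk (.inl a) (.inl b) :=
      .cons ((myc_adj_lu G a c).mpr hac) (.cons (myc_adj_uw G c)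
        (.cons (myc_adj_uw G d).symm (.cons ((myc_adj_lu G b d).mpr hbd).symm .nil)))
    have hub2 : (M).dist (.inl a) (.inl b) ≤ 4 :=
      le_trans (SimpleGraph.dist_le r) (le_of_eq rfl)
    obtain ⟨p, hp⟩ := ((myc_connected G hnb hc).exists_walk_length_eq_dist
      (Sum.inl a) (Sum.inl b))
    letI : DecidableEq (V ⊕ V ⊕ Unit) := Classical.decEq _
    have hlb : min (G.dist a b) 4 ≤ (M).dist (.inl a) (.inl b) := by
      rcases Classical.em (Wv ∈ p.support) with hw | hw
      · have hsplit := congrArg SimpleGraph.Walk.length (p.take_spec hw)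
        rw [SimpleGraph.Walk.length_append] at hsplit
        have h1 : 2 ≤ (p.takeUntil Wv hw).length := by
          have := SimpleGraph.dist_le (p.takeUntil Wv hw)
          rw [myc_dist_lw G hnb a] at this; exact this
        have h2 : 2 ≤ (p.dropUntil Wv hw).length := by
          have := SimpleGraph.dist_le (p.dropUntil Wv hw)
          rw [SimpleGraph.dist_comm, myc_dist_lw G hnb b] at this; exact this
        exact le_trans (min_le_right _ _) (by omega)
      · obtain ⟨q'', hq''⟩ := myc_proj_walk G a p hw
        have : G.dist a b ≤ q''.length := SimpleGraph.dist_le q''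
        exact le_trans (min_le_left _ _) (by omega)
    exact le_antisymm (le_min hub1 hub2) hlb

lemma myc_dist_lu_same (a : V) : (M).dist (.inl a) (Uv a) = 2 := by
  obtain ⟨c, hac⟩ := hnb a
  let p : (M).Walk (.inl a) (Uv a) :=
    .cons ((myc_adj_ll G a c).mpr hac) (.cons ((myc_adj_lu G c a).mpr hac.symm) .nil)
  have h1 : (M).dist (.inl a) (Uv a) ≤ 2 := le_trans (SimpleGraph.dist_le p) (le_of_eq rfl)
  have h0 : 0 < (M).dist (.inl a) (Uv a) :=
    SimpleGraph.Reachable.pos_dist_of_ne ⟨p⟩ (by simp)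
  have hne1 : (M).dist (.inl a) (Uv a) ≠ 1 := fun h => by
    have := SimpleGraph.dist_eq_one_iff_adj.mp h
    exact G.irrefl ((myc_adj_lu G a a).mp this)
  omega

lemma myc_dist_lu (hc : G.Connected) (a b : V) (hab : a ≠ b) :
    (M).dist (.inl a) (Uv b) = min (G.dist a b) 3 := by
  obtain ⟨q, hq⟩ := hc.exists_walk_length_eq_dist a b
  have hq0 : q.length ≠ 0 := by
    rw [hq]
    exact (hc.pos_dist_of_ne hab).ne'
  obtain ⟨q', hq'⟩ := myc_walk_to_u G q hq0
  have hub1 : (M).dist (.inl a) (Uv b) ≤ G.dist a b :=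
    le_trans (SimpleGraph.dist_le q') (by rw [hq', hq])
  obtain ⟨c, hac⟩ := hnb a
  let r : (M).Walk (.inl a) (Uv b) :=
    .cons ((myc_adj_lu G a c).mpr hac) (.cons (myc_adj_uw G c) (.cons (myc_adj_uw G b).symm .nil))
  have hub2 : (M).dist (.inl a) (Uv b) ≤ 3 := le_trans (SimpleGraph.dist_le r) (le_of_eq rfl)
  obtain ⟨p, hp⟩ := ((myc_connected G hnb hc).exists_walk_length_eq_dist
    (Sum.inl a) (Sum.inr (Sum.inl b)))
  letI : DecidableEq (V ⊕ V ⊕ Unit) := Classical.decEq _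
  have hlb : min (G.dist a b) 3 ≤ (M).dist (.inl a) (Uv b) := by
    rcases Classical.em (Wv ∈ p.support) with hw | hw
    · have hsplit := congrArg SimpleGraph.Walk.length (p.take_spec hw)
      rw [SimpleGraph.Walk.length_append] at hsplit
      have h1 : 2 ≤ (p.takeUntil Wv hw).length := by
        have := SimpleGraph.dist_le (p.takeUntil Wv hw)
        rw [myc_dist_lw G hnb a] at this; exact this
      have h2 : 1 ≤ (p.dropUntil Wv hw).length := by
        have := SimpleGraph.dist_le (p.dropUntil Wv hw)
        rw [SimpleGraph.dist_comm, myc_dist_uw G b] at this; exact this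
      exact le_trans (min_le_right _ _) (by omega)
    · obtain ⟨q'', hq''⟩ := myc_proj_walk G a p hw
      have : G.dist a b ≤ q''.length := SimpleGraph.dist_le q''
      exact le_trans (min_le_left _ _) (by omega)
  exact le_antisymm (le_min hub1 hub2) hlb

end MycAux

section CountAux

open SimpleGraph Finset

variable {V : Type*} [Fintype V] (G : SimpleGraph V)

lemma distCount_eq_card (k : ℕ) [DecidableEq V] :
    distCount G k =
      (univ.filter (fun e : Sym2 V =>
        ¬ e.IsDiag ∧ Sym2.lift ⟨G.dist, fun _ _ => G.dist_comm⟩ e = k)).card := by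
  classical
  rw [distCount, Nat.card_eq_fintype_card, Fintype.card_subtype]

lemma sum_indicator_dist (k : ℕ) (hk : k ≠ 0) :
    ∑ a : V, ∑ b : V, (if G.dist a b = k then (1:ℚ) else 0) = 2 * distCount G k := by
  classical
  have h1 : ∑ a : V, ∑ b : V, (if G.dist a b = k then (1:ℚ) else 0)
      = ((univ.filter (fun p : V × V => G.dist p.1 p.2 = k)).card : ℚ) := by
    rw [Finset.card_filter]
    push_cast
    rw [← Finset.univ_product_univ, Finset.sum_product]
  rw [h1, distCount_eq_card]
  norm_cast
  rw [Finset.card_eq_sum_card_fiberwise (f := fun p : V × V => Sym2.mk p.1 p.2)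
    (t := univ.filter (fun e : Sym2 V =>
        ¬ e.IsDiag ∧ Sym2.lift ⟨G.dist, fun _ _ => G.dist_comm⟩ e = k))
    (fun p hp => by
      simp only [coe_filter, Set.mem_setOf_eq, mem_filter, mem_univ, true_and] at hp ⊢
      have hne : p.1 ≠ p.2 := by
        intro h; rw [h, SimpleGraph.dist_self] at hp; exact hk hp.symm
      exact ⟨by simpa [Sym2.mk_isDiag_iff] using hne, by simpa using hp⟩)]
  have hfib : ∀ e ∈ (univ.filter (fun e : Sym2 V =>
        ¬ e.IsDiag ∧ Sym2.lift ⟨G.dist, fun _ _ => G.dist_comm⟩ e = k)),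
      ((univ.filter (fun p : V × V => G.dist p.1 p.2 = k)).filter
        (fun p => Sym2.mk p.1 p.2 = e)).card = 2 := by
    intro e he
    induction e with
    | _ x y =>
      simp only [mem_filter, mem_univ, true_and, Sym2.mk_isDiag_iff, Sym2.lift_mk] at he
      obtain ⟨hxy, hd⟩ := he
      have hset : ((univ.filter (fun p : V × V => G.dist p.1 p.2 = k)).filter
          (fun p => Sym2.mk p.1 p.2 = s(x, y))) = {(x, y), (y, x)} := by
        ext ⟨p1, p2⟩
        simp only [mem_filter, mem_univ, true_and, mem_insert, mem_singleton,
          Prod.mk.injEq, Sym2.eq_iff]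
        constructor
        · rintro ⟨_, (⟨rfl, rfl⟩ | ⟨rfl, rfl⟩)⟩
          · exact Or.inl ⟨rfl, rfl⟩
          · exact Or.inr ⟨rfl, rfl⟩
        · rintro (⟨rfl, rfl⟩ | ⟨rfl, rfl⟩)
          · exact ⟨hd, Or.inl ⟨rfl, rfl⟩⟩
          · exact ⟨by rwa [SimpleGraph.dist_comm], Or.inr ⟨rfl, rfl⟩⟩
      rw [hset, Finset.card_pair (by simp [hxy, Ne.symm hxy, Prod.ext_iff])]
  rw [Finset.sum_congr rfl hfib, Finset.sum_const, smul_eq_mul, mul_comm]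

omit [Fintype V] in
lemma distCount_one : distCount G 1 = Nat.card G.edgeSet := by
  apply Nat.card_congr
  apply Equiv.subtypeEquivRight
  intro e
  induction e with
  | _ x y =>
    simp only [Sym2.mk_isDiag_iff, Sym2.lift_mk, SimpleGraph.mem_edgeSet,
      SimpleGraph.dist_eq_one_iff_adj]
    exact ⟨fun h => h.2, fun h => ⟨h.ne, h⟩⟩

lemma sum_sum_ite_diag [DecidableEq V] (c : ℚ) :
    ∑ _a : V, ∑ _b : V, (if _a = _b then c else 0) = (Fintype.card V : ℚ) * c := by
  have h : ∀ a : V, ∑ b : V, (if a = b then c else 0) = c := by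
    intro a
    rw [Finset.sum_ite_eq]
    simp
  rw [Finset.sum_congr rfl (fun a _ => h a), Finset.sum_const, Finset.card_univ,
    nsmul_eq_mul]

lemma sum_sum_ite_offdiag [DecidableEq V] (c : ℚ) :
    ∑ _a : V, ∑ _b : V, (if _a = _b then 0 else c)
      = ((Fintype.card V : ℚ) ^ 2 - Fintype.card V) * c := by
  have h : ∀ a b : V, (if a = b then (0:ℚ) else c) = c - (if a = b then c else 0) := by
    intro a b; split <;> ring
  simp only [h, Finset.sum_sub_distrib]
  rw [sum_sum_ite_diag]
  simp [Finset.sum_const, Finset.card_univ, nsmul_eq_mul]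
  ring

end CountAux

/-- For a connected graph `G` with `n ≥ 2` vertices and `m` edges, with
`a_k = d(G,k)`, the Wiener index of `μ(G)` is `6n² - n - 7m - 4a₂ - a₃`. -/
theorem stmt_8 {V : Type*} [Fintype V] (G : SimpleGraph V) (n m : ℕ)
    (hn : Fintype.card V = n) (hn2 : 2 ≤ n) (hm : Nat.card G.edgeSet = m)
    (hc : G.Connected) :
    wiener (mycielskian G) =
      6 * (n : ℚ) ^ 2 - n - 7 * m - 4 * distCount G 2 - distCount G 3 := by
  classical
  subst hn
  subst hm
  have hnb : ∀ a : V, ∃ b, G.Adj a b := by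
    have hnt : Nontrivial V := Fintype.one_lt_card_iff_nontrivial.mp (by omega)
    intro a
    obtain ⟨b, hb⟩ := exists_ne a
    obtain ⟨p⟩ := hc.preconnected a b
    cases p with
    | nil => exact absurd rfl (Ne.symm hb)
    | cons h _ => exact ⟨_, h⟩
  have key_ll : ∀ a b : V, (((mycielskian G).dist (Sum.inl a) (Sum.inl b) : ℕ) : ℚ)
      = (if a = b then 0 else 4)
        - 3 * (if G.dist a b = 1 then (1:ℚ) else 0)
        - 2 * (if G.dist a b = 2 then (1:ℚ) else 0)
        - (if G.dist a b = 3 then (1:ℚ) else 0) := by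
    intro a b
    rw [myc_dist_ll G hnb hc a b]
    by_cases hab : a = b
    · subst hab
      simp [SimpleGraph.dist_self]
    · have hd0 : G.dist a b ≠ 0 := fun h => hab (hc.dist_eq_zero_iff.mp h)
      rw [if_neg hab]
      rcases Nat.lt_or_ge (G.dist a b) 4 with h4 | h4
      · have : G.dist a b = 1 ∨ G.dist a b = 2 ∨ G.dist a b = 3 := by omega
        rcases this with h | h | h <;> rw [h] <;> norm_num
      · rw [min_eq_right h4, if_neg (by omega), if_neg (by omega), if_neg (by omega)]
        norm_num
  have key_lu : ∀ a b : V, (((mycielskian G).dist (Sum.inl a) (Sum.inr (Sum.inl b)) : ℕ) : ℚ)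
      = (if a = b then 2 else 0) + (if a = b then 0 else 3)
        - 2 * (if G.dist a b = 1 then (1:ℚ) else 0)
        - (if G.dist a b = 2 then (1:ℚ) else 0) := by
    intro a b
    by_cases hab : a = b
    · subst hab
      rw [myc_dist_lu_same G hnb a]
      simp [SimpleGraph.dist_self]
    · rw [myc_dist_lu G hnb hc a b hab, if_neg hab, if_neg hab]
      have hd0 : G.dist a b ≠ 0 := fun h => hab (hc.dist_eq_zero_iff.mp h)
      rcases Nat.lt_or_ge (G.dist a b) 3 with h3 | h3
      · have : G.dist a b = 1 ∨ G.dist a b = 2 := by omega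
        rcases this with h | h <;> rw [h] <;> norm_num
      · rw [min_eq_right h3, if_neg (by omega), if_neg (by omega)]
        norm_num
  have key_ul : ∀ a b : V, (((mycielskian G).dist (Sum.inr (Sum.inl a)) (Sum.inl b) : ℕ) : ℚ)
      = (if a = b then 2 else 0) + (if a = b then 0 else 3)
        - 2 * (if G.dist a b = 1 then (1:ℚ) else 0)
        - (if G.dist a b = 2 then (1:ℚ) else 0) := by
    intro a b
    rw [SimpleGraph.dist_comm, key_lu b a, show (b = a) = (a = b) from propext eq_comm,
      SimpleGraph.dist_comm (G := G) (u := b) (v := a)]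
  have key_uu : ∀ a b : V, (((mycielskian G).dist (Sum.inr (Sum.inl a)) (Sum.inr (Sum.inl b)) : ℕ) : ℚ)
      = (if a = b then 0 else 2) := by
    intro a b
    by_cases hab : a = b
    · subst hab; simp [SimpleGraph.dist_self]
    · rw [myc_dist_uu G a b hab, if_neg hab]
      norm_num
  have key_lw : ∀ (a : V) (u : Unit),
      (((mycielskian G).dist (Sum.inl a) (Sum.inr (Sum.inr u)) : ℕ) : ℚ) = 2 := by
    intro a u; cases u; rw [myc_dist_lw G hnb a]; norm_num
  have key_wl : ∀ (u : Unit) (a : V),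
      (((mycielskian G).dist (Sum.inr (Sum.inr u)) (Sum.inl a) : ℕ) : ℚ) = 2 := by
    intro u a; rw [SimpleGraph.dist_comm, key_lw a u]
  have key_uw : ∀ (a : V) (u : Unit),
      (((mycielskian G).dist (Sum.inr (Sum.inl a)) (Sum.inr (Sum.inr u)) : ℕ) : ℚ) = 1 := by
    intro a u; cases u; rw [myc_dist_uw G a]; norm_num
  have key_wu : ∀ (u : Unit) (a : V),
      (((mycielskian G).dist (Sum.inr (Sum.inr u)) (Sum.inr (Sum.inl a)) : ℕ) : ℚ) = 1 := by
    intro u a; rw [SimpleGraph.dist_comm, key_uw a u]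
  have key_ww : ∀ (u u' : Unit),
      (((mycielskian G).dist (Sum.inr (Sum.inr u)) (Sum.inr (Sum.inr u')) : ℕ) : ℚ) = 0 := by
    intro u u'; cases u; cases u'; rw [SimpleGraph.dist_self]; norm_num
  rw [wiener]
  simp only [Fintype.sum_sum_type, Finset.univ_unique, Finset.sum_singleton]
  simp only [key_ll, key_lu, key_ul, key_uu, key_lw, key_wl, key_uw, key_wu, key_ww]
  simp only [Finset.sum_add_distrib, Finset.sum_sub_distrib, ← Finset.mul_sum,
    Finset.sum_const, Finset.card_univ, nsmul_eq_mul]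
  rw [sum_indicator_dist G 1 one_ne_zero, sum_indicator_dist G 2 (by norm_num),
    sum_indicator_dist G 3 (by norm_num)]
  simp only [sum_sum_ite_diag, sum_sum_ite_offdiag]
  rw [← distCount_one G]
  ring
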